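/- A finite cyclic group has no nontrivial relations between permutation representations: if G is cyclic and Σᵢ nᵢ ℂ[G/Hᵢ] = 0 as a virtual representation (Hᵢ ranging over distinct subgroups), then all nᵢ = 0. -/

import Mathlib

open scoped BigOperators

/-- The permutation character of `G` acting on the left cosets `G / H`:
its value at `g` is the number of fixed points of `g` on `G / H`, i.e. the character
of the complex permutation representation `C[G/H]`. -/
noncomputable def permChar {G : Type*} [Group G] (H : Subgroup G) (g : G) : ℤ :=
  Nat.card {x : G ⧸ H // g • x = x}

open scoped Classical in
lemma permChar_eq {G : Type*} [Group G] (hc : ∀ a b : G, a * b = b * a)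
    (H : Subgroup G) (g : G) :
    permChar H g = if g ∈ H then (H.index : ℤ) else 0 := by
  have key : ∀ x : G ⧸ H, g • x = x ↔ g ∈ H := by
    intro x
    induction x using QuotientGroup.induction_on with
    | H x =>
      show (QuotientGroup.mk (g * x) : G ⧸ H) = QuotientGroup.mk x ↔ _
      rw [QuotientGroup.eq]
      have e : (g * x)⁻¹ * x = g⁻¹ := by
        rw [mul_inv_rev, mul_assoc, hc g⁻¹ x, ← mul_assoc]
        simp
      rw [e]
      exact ⟨fun h => by simpa using H.inv_mem h, fun h => H.inv_mem h⟩
  unfold permChar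
  by_cases hg : g ∈ H
  · rw [if_pos hg]
    rw [Nat.card_eq_of_bijective (f := fun x : {x : G ⧸ H // g • x = x} => x.1)]
    · rfl
    · exact ⟨fun a b h => Subtype.ext h, fun y => ⟨⟨y, (key y).mpr hg⟩, rfl⟩⟩
  · rw [if_neg hg]
    have : IsEmpty {x : G ⧸ H // g • x = x} := ⟨fun x => hg ((key x.1).mp x.2)⟩
    simp [Nat.card_of_isEmpty]

/-- A finite cyclic group has no nontrivial relations between permutation
representations: if a ZZ-linear combination of the permutation representations
`C[G/H]`, over distinct subgroups H (a Finset of subgroups), is zero as a virtual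
representation (equivalently its character vanishes), then all coefficients vanish. -/
theorem cyclic_has_no_relations
    {G : Type*} [Group G] [Fintype G] [IsCyclic G]
    (s : Finset (Subgroup G)) (n : Subgroup G → ℤ)
    (hrel : ∀ g : G, ∑ H ∈ s, n H * permChar H g = 0) :
    ∀ H ∈ s, n H = 0 := by
  classical
  have hc : ∀ a b : G, a * b = b * a := fun a b =>
    (IsCyclic.commGroup (α := G)).mul_comm a b
  revert hrel
  induction s using Finset.strongInduction with
  | _ s ih =>
    intro hrel
    rcases s.eq_empty_or_nonempty with rfl | hne
    · intro H hH; simp at hH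
    · obtain ⟨H₀, hH₀s, hmax⟩ := s.exists_maximal hne
      -- generator of H₀
      obtain ⟨⟨g, hgH₀⟩, hgen⟩ := IsCyclic.exists_generator (α := H₀)
      have hzp : Subgroup.zpowers g = H₀ := by
        apply le_antisymm
        · exact Subgroup.zpowers_le.mpr hgH₀
        · intro x hx
          obtain ⟨k, hk⟩ := hgen ⟨x, hx⟩
          have : (g : G) ^ k = x := congrArg Subtype.val hk
          exact this ▸ zpow_mem (Subgroup.mem_zpowers g) k
      have hmem : ∀ K ∈ s, g ∈ K ↔ K = H₀ := by
        intro K hK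
        constructor
        · intro hgK
          have hle : H₀ ≤ K := hzp ▸ Subgroup.zpowers_le.mpr hgK
          by_contra hne'
          exact hne' (le_antisymm (hmax hK hle) hle)
        · rintro rfl; exact hgH₀
      have h0 : n H₀ = 0 := by
        have := hrel g
        rw [Finset.sum_eq_single H₀ (fun K hK hKne => by
          rw [permChar_eq hc, if_neg (fun h => hKne ((hmem K hK).mp h)), mul_zero])
          (fun h => absurd hH₀s h)] at this
        rw [permChar_eq hc, if_pos hgH₀] at this
        have hidx : (H₀.index : ℤ) ≠ 0 := by
          exact_mod_cast Subgroup.index_ne_zero_of_finite (H := H₀)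
        exact (mul_eq_zero.mp this).resolve_right hidx
      intro H hH
      rcases eq_or_ne H H₀ with rfl | hne'
      · exact h0
      · refine ih (s.erase H₀) (Finset.erase_ssubset hH₀s) ?_ H
          (Finset.mem_erase.mpr ⟨hne', hH⟩)
        intro x
        have := hrel x
        rw [← Finset.sum_erase_add _ _ hH₀s, h0, zero_mul, add_zero] at this
        exact this
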